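/- Let S be a finite set, w : S → [0,∞), T ⊆ S with l := |S ∖ T|, and let m be an integer with 1 ≤ m ≤ |T|. Then the sum of the m smallest values of w restricted to T is at most ∑_{t=l+1}^{l+m} w_{(t)}, where w_{(1)} ≤ w_{(2)} ≤ ⋯ ≤ w_{(|S|)} denotes the increasing rearrangement of the values of w on S. -/

import Mathlib

open Finset

/-- order-statistics selection bound: if `T ⊆ S`, `l = |S ∖ T|`, and
`1 ≤ m ≤ |T|`, then the sum of the `m` smallest values of `w` on `T` is at most
`∑_{t=l+1}^{l+m} w_{(t)}`, where `w_{(1)} ≤ ⋯ ≤ w_{(|S|)}` (encoded by the monotone function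
`g` on `{1,…,|S|}` whose multiset of values equals that of `w` on `S`) is the increasing
rearrangement of the values of `w` on `S`. -/
theorem stmt_12 {α : Type*} [DecidableEq α] (S : Finset α) (w : α → ℝ)
    (hw : ∀ a ∈ S, 0 ≤ w a) (T : Finset α) (hT : T ⊆ S)
    (g : ℕ → ℝ)
    (hgmono : ∀ i j : ℕ, 1 ≤ i → i ≤ j → j ≤ S.card → g i ≤ g j)
    (hgperm : (Finset.Icc 1 S.card).val.map g = S.val.map w)
    (m : ℕ) (hm1 : 1 ≤ m) (hmT : m ≤ T.card) :
    sInf {x : ℝ | ∃ U : Finset α, U ⊆ T ∧ U.card = m ∧ x = ∑ a ∈ U, w a}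
      ≤ ∑ t ∈ Finset.Icc ((S \ T).card + 1) ((S \ T).card + m), g t := by
  classical
  set n := S.card with hn
  set l := (S \ T).card with hl
  have hlk : l + T.card = n := by
    rw [hl, Finset.card_sdiff_of_subset hT]
    have := Finset.card_le_card hT
    omega
  -- the sorted list of values of w on S
  set LS : List ℝ := (List.range' 1 n).map g with hLS
  have hLSlen : LS.length = n := by simp [hLS]
  have hLSget : ∀ (i : Fin LS.length), LS.get i = g (1 + (i : ℕ)) := by
    intro i
    simp [hLS, List.getElem_map]
  have hLSsorted : LS.Pairwise (· ≤ ·) := by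
    rw [List.pairwise_iff_get]
    intro i j hij
    rw [hLSget, hLSget]
    have hj : (j : ℕ) < n := by simpa [hLSlen] using j.isLt
    exact hgmono _ _ (by omega) (by omega) (by omega)
  have hLScoe : (LS : Multiset ℝ) = S.val.map w := by
    rw [← hgperm, hLS, ← Multiset.map_coe]
    have : (Finset.Icc 1 n).val = ((List.range' 1 n : List ℕ) : Multiset ℕ) := by
      rw [Nat.Icc_eq_range']
      simp
    rw [this]
  -- the sorted list of values of w on T
  set r : α → α → Prop := fun a b => w a ≤ w b with hr
  letI : DecidableRel r := fun a b => by unfold r; infer_instance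
  haveI : IsTotal α r := ⟨fun a b => le_total (w a) (w b)⟩
  haveI : IsTrans α r := ⟨fun a b c => le_trans⟩
  set Lα := List.insertionSort r T.toList with hLα
  have hLαperm : List.Perm Lα T.toList := List.perm_insertionSort r _
  have hLαnodup : Lα.Nodup := hLαperm.nodup_iff.mpr T.nodup_toList
  set LT := Lα.map w with hLT
  have hLTsorted : LT.Pairwise (· ≤ ·) :=
    List.Pairwise.map w (fun a b h => h) (List.pairwise_insertionSort r _)
  have hLTcoe : (LT : Multiset ℝ) = T.val.map w := by
    rw [hLT, ← Multiset.map_coe]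
    congr 1
    rw [Multiset.coe_eq_coe.mpr hLαperm]
    simp [Finset.toList]
  have hLTlen : LT.length = T.card := by
    simp [hLT, hLα]
  have hsub : List.Sublist LT LS := by
    refine List.sublist_of_subperm_of_pairwise (Multiset.coe_le.mp ?_) hLTsorted hLSsorted
    rw [hLTcoe, hLScoe]
    exact Multiset.map_le_map (Finset.val_le_iff.mpr hT)
  obtain ⟨f, hf⟩ := List.sublist_iff_exists_fin_orderEmbedding_get_eq.mp hsub
  -- index bound : f i ≤ i + l
  have key : ∀ (d : ℕ) (i j : Fin LT.length), (j : ℕ) = i + d →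
      (f i : ℕ) + d ≤ f j := by
    intro d
    induction d with
    | zero =>
      intro i j hij
      have : i = j := Fin.ext (by omega)
      simp [this]
    | succ d ih =>
      intro i j hij
      have hd : (i : ℕ) + d < LT.length := by have := j.isLt; omega
      have h1 := ih i ⟨(i : ℕ) + d, hd⟩ rfl
      have h2 : f ⟨(i : ℕ) + d, hd⟩ < f j := f.strictMono (by rw [Fin.lt_def]; simp; omega)
      rw [Fin.lt_def] at h2
      omega
  have hfb : ∀ i : Fin LT.length, (f i : ℕ) ≤ (i : ℕ) + l := by
    intro i
    have hpos : 0 < LT.length := i.pos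
    have hlast : (LT.length - 1 : ℕ) < LT.length := by omega
    have h1 := key (LT.length - 1 - i) i ⟨LT.length - 1, hlast⟩ (by simp; omega)
    have h2 : (f ⟨LT.length - 1, hlast⟩ : ℕ) < n := by
      have := (f ⟨LT.length - 1, hlast⟩).isLt; omega
    have := i.isLt
    omega
  -- entrywise bound
  have hentry : ∀ (i : ℕ) (h : i < LT.length), LT.get ⟨i, h⟩ ≤ g (l + 1 + i) := by
    intro i h
    rw [hf ⟨i, h⟩, hLSget]
    have hfi : (f ⟨i, h⟩ : ℕ) ≤ i + l := by simpa using hfb ⟨i, h⟩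
    have hLT2 : i < T.card := by omega
    exact hgmono _ _ (by omega) (by omega) (by omega)
  -- the candidate subset U
  set U := (Lα.take m).toFinset with hU
  have hmlen : m ≤ Lα.length := by
    have : Lα.length = T.card := by simp [hLα]
    omega
  have htn : (Lα.take m).Nodup := (List.take_sublist m Lα).nodup hLαnodup
  have hUsub : U ⊆ T := by
    intro a ha
    rw [hU, List.mem_toFinset] at ha
    have := hLαperm.mem_iff.mp (List.mem_of_mem_take ha)
    rwa [Finset.mem_toList] at this
  have hUcard : U.card = m := by
    rw [hU, List.toFinset_card_of_nodup htn, List.length_take, min_eq_left hmlen]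
  have hUsum : ∑ a ∈ U, w a = (LT.take m).sum := by
    rw [hU, List.sum_toFinset _ htn, hLT, List.map_take]
  -- sum comparison via Forall₂
  have hmlen' : m ≤ LT.length := by simpa [hLT] using hmlen
  have hforall : List.Forall₂ (· ≤ ·) (LT.take m) ((List.range' (l + 1) m).map g) := by
    rw [List.forall₂_iff_get]
    constructor
    · simp [min_eq_left hmlen']
    · intro i h1 h2
      have hi : i < m := by simpa [min_eq_left hmlen'] using h1
      have hil : i < LT.length := lt_of_lt_of_le hi hmlen'
      have hgt : (LT.take m).get ⟨i, h1⟩ = LT.get ⟨i, hil⟩ := by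
        simp [List.getElem_take]
      rw [hgt]
      have hrt : ((List.range' (l + 1) m).map g).get ⟨i, h2⟩ = g (l + 1 + i) := by
        simp [List.getElem_map]
      rw [hrt]
      exact hentry i hil
  have hsum : (LT.take m).sum ≤ ((List.range' (l + 1) m).map g).sum :=
    hforall.sum_le_sum
  -- identify RHS
  have hRHS : ∑ t ∈ Finset.Icc (l + 1) (l + m), g t = ((List.range' (l + 1) m).map g).sum := by
    rw [Finset.sum, Nat.Icc_eq_range']
    have : l + m + 1 - (l + 1) = m := by omega
    rw [this]
    simp [Multiset.map_coe]
  -- finish via csInf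
  have hmem : (∑ a ∈ U, w a) ∈ {x : ℝ | ∃ U : Finset α, U ⊆ T ∧ U.card = m ∧ x = ∑ a ∈ U, w a} :=
    ⟨U, hUsub, hUcard, rfl⟩
  have hbdd : BddBelow {x : ℝ | ∃ U : Finset α, U ⊆ T ∧ U.card = m ∧ x = ∑ a ∈ U, w a} := by
    refine ⟨0, ?_⟩
    rintro x ⟨V, hV, _, rfl⟩
    exact Finset.sum_nonneg fun a ha => hw a (hT (hV ha))
  refine le_trans (csInf_le hbdd hmem) ?_
  rw [hUsum, hRHS]
  exact hsum
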